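/- Let Ω be a real symmetric n×n matrix with orthogonal diagonalization e^Ω = Qᵀ diag(λ₁,...,λ_n) Q. Then ∫₀¹ e^{tΩ} ⊗ e^{(1−t)Ω} dt = (Q ⊗ Q)ᵀ M (Q ⊗ Q), where M is the n²×n² diagonal matrix whose ((i−1)n+j)-th diagonal entry equals λ_i if λ_i = λ_j and (λ_i − λ_j)/(log λ_i − log λ_j) if λ_i ≠ λ_j. -/

import Mathlib

open Matrix Kronecker

lemma exp_inj_selfAdjoint {n : ℕ} {A B : Matrix (Fin n) (Fin n) ℝ}
    (hA : IsSelfAdjoint A) (hB : IsSelfAdjoint B)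
    (h : NormedSpace.exp A = NormedSpace.exp B) : A = B := by
  letI : NormedRing (Matrix (Fin n) (Fin n) ℝ) := Matrix.instL2OpNormedRing
  letI : NormedAlgebra ℝ (Matrix (Fin n) (Fin n) ℝ) := Matrix.instL2OpNormedAlgebra
  rw [← CFC.log_exp A hA, h, CFC.log_exp B hB]

lemma integral_exp_affine (c b : ℝ) (hc : c ≠ 0) :
    ∫ t in (0:ℝ)..1, Real.exp (c * t + b) = (Real.exp (c + b) - Real.exp b) / c := by
  have h : ∀ t ∈ Set.uIcc (0:ℝ) 1,
      HasDerivAt (fun t => Real.exp (c * t + b) / c) (Real.exp (c * t + b)) t := by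
    intro t _
    have h1 : HasDerivAt (fun t : ℝ => c * t + b) c t := by
      simpa using ((hasDerivAt_id t).const_mul c).add_const b
    have h2 := (h1.exp).div_const c
    simpa [mul_div_cancel_right₀ _ hc] using h2
  have hint : IntervalIntegrable (fun t => Real.exp (c * t + b)) MeasureTheory.volume 0 1 :=
    (Real.continuous_exp.comp (by continuity)).intervalIntegrable 0 1
  rw [intervalIntegral.integral_eq_sub_of_hasDerivAt h hint]
  ring

/-- Let `Ω` be a real symmetric `n×n` matrix with `e^Ω = Qᵀ diag(λ) Q`, `Q` orthogonal.
Then `∫₀¹ e^{tΩ} ⊗ e^{(1−t)Ω} dt = (Q ⊗ Q)ᵀ M (Q ⊗ Q)` where `M` is diagonal with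
entries `λᵢ` (if `λᵢ = λⱼ`) and `(λᵢ − λⱼ)/(log λᵢ − log λⱼ)` (if `λᵢ ≠ λⱼ`);
the integral is taken entrywise. -/
theorem integral_exp_kron_diagonalization {n : ℕ}
    (Ω Q : Matrix (Fin n) (Fin n) ℝ) (lam : Fin n → ℝ)
    (hΩ : Ω.IsSymm) (hlam : ∀ i, 0 < lam i)
    (hQ : Qᵀ * Q = 1) (hQ' : Q * Qᵀ = 1)
    (hdiag : NormedSpace.exp Ω = Qᵀ * Matrix.diagonal lam * Q) :
    (Matrix.of fun p q : Fin n × Fin n =>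
        ∫ t in (0 : ℝ)..1,
          ((NormedSpace.exp (t • Ω)) ⊗ₖ (NormedSpace.exp ((1 - t) • Ω))) p q) =
      (Q ⊗ₖ Q)ᵀ *
        (Matrix.diagonal fun p : Fin n × Fin n =>
          if lam p.1 = lam p.2 then lam p.1
          else (lam p.1 - lam p.2) / (Real.log (lam p.1) - Real.log (lam p.2))) *
        (Q ⊗ₖ Q) := by
  have hQinv : Q⁻¹ = Qᵀ := Matrix.inv_eq_right_inv hQ'
  have hQTinv : Qᵀ⁻¹ = Q := Matrix.inv_eq_right_inv hQ
  have hQT_unit : IsUnit Qᵀ := ⟨⟨Qᵀ, Q, hQ, hQ'⟩, rfl⟩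
  have hQ_unit : IsUnit Q := ⟨⟨Q, Qᵀ, hQ', hQ⟩, rfl⟩
  set L : Matrix (Fin n) (Fin n) ℝ := Matrix.diagonal (fun i => Real.log (lam i)) with hLdef
  -- exp of diagonal matrices
  have hexpdiag : ∀ (v : Fin n → ℝ),
      NormedSpace.exp (Matrix.diagonal v) = Matrix.diagonal (fun i => Real.exp (v i)) := by
    intro v
    rw [Matrix.exp_diagonal, Pi.exp_def]
    congr 1
    funext i
    rw [← Real.exp_eq_exp_ℝ]
  have hexpL : NormedSpace.exp L = Matrix.diagonal lam := by
    rw [hLdef, hexpdiag]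
    exact congrArg Matrix.diagonal (funext fun i => Real.exp_log (hlam i))
  -- selfadjointness
  have hsaΩ : _root_.IsSelfAdjoint Ω := by
    rw [_root_.IsSelfAdjoint, Matrix.star_eq_conjTranspose,
      Matrix.conjTranspose_eq_transpose_of_trivial]
    exact hΩ
  have hsaS : _root_.IsSelfAdjoint (Q * Ω * Qᵀ) := by
    rw [_root_.IsSelfAdjoint, Matrix.star_eq_conjTranspose]
    simp [Matrix.conjTranspose_mul, Matrix.conjTranspose_eq_transpose_of_trivial, hΩ.eq,
      Matrix.mul_assoc]
  have hsaL : _root_.IsSelfAdjoint L := by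
    rw [_root_.IsSelfAdjoint, Matrix.star_eq_conjTranspose,
      Matrix.conjTranspose_eq_transpose_of_trivial, hLdef, Matrix.diagonal_transpose]
  -- Q Ω Qᵀ = L
  have hexpS : NormedSpace.exp (Q * Ω * Qᵀ) = NormedSpace.exp L := by
    have hc := Matrix.exp_conj Q Ω hQ_unit
    rw [hQinv] at hc
    rw [hexpL, hc, hdiag]
    calc Q * (Qᵀ * Matrix.diagonal lam * Q) * Qᵀ
        = (Q * Qᵀ) * Matrix.diagonal lam * (Q * Qᵀ) := by noncomm_ring
      _ = Matrix.diagonal lam := by rw [hQ']; simp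
  have hSL : Q * Ω * Qᵀ = L := exp_inj_selfAdjoint hsaS hsaL hexpS
  have hΩeq : Ω = Qᵀ * L * Q := by
    rw [← hSL]
    calc Ω = (Qᵀ * Q) * Ω * (Qᵀ * Q) := by rw [hQ]; simp
    _ = Qᵀ * (Q * Ω * Qᵀ) * Q := by noncomm_ring
  -- exp of t • Ω
  have hexpt : ∀ t : ℝ, NormedSpace.exp (t • Ω) =
      Qᵀ * Matrix.diagonal (fun i => Real.exp (t * Real.log (lam i))) * Q := by
    intro t
    have h1 : t • Ω = Qᵀ * Matrix.diagonal (fun i => t * Real.log (lam i)) * Q := by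
      rw [hΩeq, hLdef, show (fun i => t * Real.log (lam i)) = t • (fun i => Real.log (lam i)) from rfl,
        Matrix.diagonal_smul, Matrix.mul_smul, Matrix.smul_mul]
    have hc := Matrix.exp_conj' Q (Matrix.diagonal (fun i => t * Real.log (lam i))) hQ_unit
    rw [hQinv] at hc
    rw [h1, hc, hexpdiag]
  -- the Kronecker product as a conjugated diagonal matrix
  set g : ℝ → Fin n → ℝ := fun t i => Real.exp (t * Real.log (lam i)) with hgdef
  have hkron : ∀ t : ℝ, (NormedSpace.exp (t • Ω)) ⊗ₖ (NormedSpace.exp ((1 - t) • Ω)) =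
      (Q ⊗ₖ Q)ᵀ * Matrix.diagonal (fun p : Fin n × Fin n => g t p.1 * g (1 - t) p.2) *
        (Q ⊗ₖ Q) := by
    intro t
    rw [hexpt t, hexpt (1 - t), Matrix.mul_kronecker_mul, Matrix.mul_kronecker_mul,
      Matrix.diagonal_kronecker_diagonal, Matrix.kroneckerMap_transpose]
  -- the scalar integral
  have hval : ∀ p : Fin n × Fin n, (∫ t in (0:ℝ)..1, g t p.1 * g (1 - t) p.2) =
      (if lam p.1 = lam p.2 then lam p.1
        else (lam p.1 - lam p.2) / (Real.log (lam p.1) - Real.log (lam p.2))) := by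
    rintro ⟨i, j⟩
    have hg : ∀ t : ℝ, g t i * g (1 - t) j =
        Real.exp ((Real.log (lam i) - Real.log (lam j)) * t + Real.log (lam j)) := by
      intro t
      rw [hgdef, ← Real.exp_add]
      ring_nf
    simp only [hg]
    by_cases h : lam i = lam j
    · rw [if_pos h, h, sub_self]
      simp [Real.exp_log (hlam j)]
    · have hc : Real.log (lam i) - Real.log (lam j) ≠ 0 := by
        intro hc0
        apply h
        have : Real.log (lam i) = Real.log (lam j) := by linarith [sub_eq_zero.mp hc0]
        rw [← Real.exp_log (hlam i), this, Real.exp_log (hlam j)]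
      rw [integral_exp_affine _ _ hc, if_neg h, sub_add_cancel, Real.exp_log (hlam i),
        Real.exp_log (hlam j)]
  -- entrywise computation
  ext p q
  rw [Matrix.of_apply]
  calc (∫ t in (0:ℝ)..1,
        ((NormedSpace.exp (t • Ω)) ⊗ₖ (NormedSpace.exp ((1 - t) • Ω))) p q)
      = ∫ t in (0:ℝ)..1, ∑ k : Fin n × Fin n,
          (Q ⊗ₖ Q) k p * (g t k.1 * g (1 - t) k.2) * (Q ⊗ₖ Q) k q := by
        apply intervalIntegral.integral_congr
        intro t _
        dsimp only
        rw [hkron t, Matrix.mul_assoc, Matrix.mul_apply]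
        congr 1
        funext k
        rw [Matrix.diagonal_mul, Matrix.transpose_apply]
        ring
    _ = ∑ k : Fin n × Fin n,
          (Q ⊗ₖ Q) k p * (∫ t in (0:ℝ)..1, g t k.1 * g (1 - t) k.2) * (Q ⊗ₖ Q) k q := by
        rw [intervalIntegral.integral_finset_sum]
        · congr 1
          funext k
          have hrw : (fun t => (Q ⊗ₖ Q) k p * (g t k.1 * g (1 - t) k.2) * (Q ⊗ₖ Q) k q)
              = fun t => ((Q ⊗ₖ Q) k p * (Q ⊗ₖ Q) k q) * (g t k.1 * g (1 - t) k.2) := by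
            funext t; ring
          simp only [hrw, intervalIntegral.integral_const_mul]
          ring
        · intro k _
          apply Continuous.intervalIntegrable
          fun_prop
    _ = ((Q ⊗ₖ Q)ᵀ *
        (Matrix.diagonal fun p : Fin n × Fin n =>
          if lam p.1 = lam p.2 then lam p.1
          else (lam p.1 - lam p.2) / (Real.log (lam p.1) - Real.log (lam p.2))) *
        (Q ⊗ₖ Q)) p q := by
        rw [Matrix.mul_assoc, Matrix.mul_apply]
        congr 1
        funext k
        rw [Matrix.diagonal_mul, Matrix.transpose_apply, hval k]
        ring
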